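/- For d ≥ 2 and ν ∈ (-√(d-1), 1/√(d-1)), the map T : M_d(ℂ) → M_d(ℂ) given by T(X) = (tr X / d) · (1 + (ν/√(d-1))(1 - dψ)), where ψ is a rank-one projector, is completely positive and trace-preserving. -/

import Mathlib

open Matrix
open scoped ComplexOrder
open scoped Kronecker

lemma psd_smul_real {n : Type*} [Fintype n] {A : Matrix n n ℂ} (hA : A.PosSemidef)
    {r : ℝ} (hr : 0 ≤ r) : ((r : ℂ) • A).PosSemidef := by
  constructor
  · unfold Matrix.IsHermitian
    rw [conjTranspose_smul, hA.1]
    norm_num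
  · intro x
    exact (hA.smul (a := (r : ℂ)) (by exact_mod_cast Complex.zero_le_real.2 hr)).2 x

lemma kron_conjT {m n : Type*} (A : Matrix m m ℂ) (B : Matrix n n ℂ) :
    (A ⊗ₖ B)ᴴ = Aᴴ ⊗ₖ Bᴴ := by
  ext p q
  simp [conjTranspose_apply, kroneckerMap_apply, mul_comm]

lemma one_kron_psd {m n : Type*} [Fintype m] [Fintype n] [DecidableEq m] [DecidableEq n]
    {M : Matrix n n ℂ} (hM : M.PosSemidef) :
    ((1 : Matrix m m ℂ) ⊗ₖ M).PosSemidef := by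
  obtain ⟨B, rfl⟩ : ∃ B : Matrix n n ℂ, M = Bᴴ * B := by
    open scoped MatrixOrder in exact CStarAlgebra.nonneg_iff_eq_star_mul_self.mp hM.nonneg
  have : (1 : Matrix m m ℂ) ⊗ₖ (Bᴴ * B)
      = ((1 : Matrix m m ℂ) ⊗ₖ B)ᴴ * ((1 : Matrix m m ℂ) ⊗ₖ B) := by
    rw [kron_conjT, conjTranspose_one, ← Matrix.mul_kronecker_mul, one_mul]
  rw [this]
  exact Matrix.posSemidef_conjTranspose_mul_self _

lemma proj_psd {d : ℕ} (v : Fin d → ℂ) (hv : star v ⬝ᵥ v = 1) :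
    (Matrix.vecMulVec v (star v)).PosSemidef ∧
      ((1 : Matrix (Fin d) (Fin d) ℂ) - Matrix.vecMulVec v (star v)).PosSemidef := by
  set ψ := Matrix.vecMulVec v (star v) with hψ
  have hherm : ψᴴ = ψ := by
    ext i j
    simp [hψ, conjTranspose_apply, vecMulVec_apply, mul_comm]
  have hidem : ψ * ψ = ψ := by
    ext i j
    simp only [hψ, mul_apply, vecMulVec_apply]
    have h1 : ∑ k, v i * star v k * (v k * star v j)
        = (v i * star v j) * ∑ k, star v k * v k := by
      rw [Finset.mul_sum]; congr 1; ext k; ring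
    rw [h1]
    have h2 : ∑ k, star v k * v k = 1 := hv
    rw [h2, mul_one]
  constructor
  · have : ψ = ψᴴ * ψ := by rw [hherm, hidem]
    rw [this]; exact Matrix.posSemidef_conjTranspose_mul_self _
  · have : (1 : Matrix (Fin d) (Fin d) ℂ) - ψ = (1 - ψ)ᴴ * (1 - ψ) := by
      rw [conjTranspose_sub, conjTranspose_one, hherm, sub_mul, mul_sub, mul_sub, hidem]
      simp
    rw [this]; exact Matrix.posSemidef_conjTranspose_mul_self _

/-- The Choi matrix `C(T) = Σ_{ij} E_{ij} ⊗ T(E_{ij})` of a linear map on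
`M_d(ℂ)`, as a matrix indexed by pairs: `C(T)_((i,k),(j,l)) = T(E_{ij})_{kl}`. -/
def choiMatrix {d : ℕ}
    (T : Matrix (Fin d) (Fin d) ℂ →ₗ[ℂ] Matrix (Fin d) (Fin d) ℂ) :
    Matrix (Fin d × Fin d) (Fin d × Fin d) ℂ :=
  fun p q => T (Matrix.single p.1 q.1 1) p.2 q.2

/-- For `d ≥ 2` and `ν ∈ (-√(d-1), 1/√(d-1))`, the map
`T(X) = (tr X / d) · (1 + (ν/√(d-1))(1 - dψ))`, `ψ` a rank-one projector,
is completely positive (its Choi matrix is positive semidefinite) and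
trace-preserving. -/
theorem depolarizing_like_map_cptp
    {d : ℕ} (hd : 2 ≤ d) (ν : ℝ)
    (hν : ν ∈ Set.Ioo (-Real.sqrt ((d : ℝ) - 1)) (1 / Real.sqrt ((d : ℝ) - 1)))
    (v : Fin d → ℂ) (hv : star v ⬝ᵥ v = 1)
    (T : Matrix (Fin d) (Fin d) ℂ →ₗ[ℂ] Matrix (Fin d) (Fin d) ℂ)
    (hT : ∀ X, T X = (X.trace / d) •
        (1 + ((ν / Real.sqrt ((d : ℝ) - 1) : ℝ) : ℂ) •
          (1 - (d : ℂ) • Matrix.vecMulVec v (star v)))) :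
    (choiMatrix T).PosSemidef ∧ ∀ X, (T X).trace = X.trace := by
  set s : ℝ := Real.sqrt ((d : ℝ) - 1) with hs_def
  set c : ℝ := ν / s with hc_def
  set ψ := Matrix.vecMulVec v (star v) with hψ
  set M : Matrix (Fin d) (Fin d) ℂ :=
    1 + (c : ℂ) • (1 - (d : ℂ) • ψ) with hM_def
  have hd1 : (1 : ℝ) ≤ (d : ℝ) - 1 := by
    have : (2 : ℝ) ≤ (d : ℝ) := by exact_mod_cast hd
    linarith
  have hs : 0 < s := Real.sqrt_pos.mpr (by linarith)
  have hs2 : s ^ 2 = (d : ℝ) - 1 := Real.sq_sqrt (by linarith)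
  -- coefficient bounds
  have h1 : 0 ≤ 1 + c := by
    have : (-1 : ℝ) < ν / s := by
      rw [lt_div_iff₀ hs]; linarith [hν.1]
    rw [hc_def]; linarith
  have hνs : ν * s < 1 := by
    have := hν.2
    rw [lt_div_iff₀ hs] at this
    linarith
  have hcd : c * ((d : ℝ) - 1) = ν * s := by
    rw [hc_def, ← hs2]; field_simp
  have hcd2 : c * (d : ℝ) = ν * s + c := by rw [← hcd]; ring
  have h2 : 0 ≤ 1 + c - c * (d : ℝ) := by rw [hcd2]; linarith
  -- M is PSD
  obtain ⟨hψ_psd, hcompl_psd⟩ := proj_psd v hv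
  have hdecomp : M = ((1 + c : ℝ) : ℂ) • (1 - ψ) + ((1 + c - c * d : ℝ) : ℂ) • ψ := by
    rw [hM_def]
    push_cast
    module
  have hM_psd : M.PosSemidef := by
    rw [hdecomp]
    exact (psd_smul_real hcompl_psd h1).add (psd_smul_real hψ_psd h2)
  have hdC : (0 : ℝ) ≤ (d : ℝ)⁻¹ := by positivity
  -- Choi matrix
  have hchoi : choiMatrix T = (1 : Matrix (Fin d) (Fin d) ℂ) ⊗ₖ ((((d : ℝ)⁻¹ : ℝ) : ℂ) • M) := by
    ext ⟨i, k⟩ ⟨j, l⟩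
    rw [choiMatrix]
    simp only [hT, kroneckerMap_apply, Matrix.smul_apply, smul_eq_mul, Matrix.one_apply]
    by_cases hij : i = j
    · subst hij
      rw [Matrix.trace_single_eq_same]
      rw [if_pos rfl]
      push_cast
      ring
    · rw [Matrix.trace_single_eq_of_ne (h := hij)]
      rw [if_neg hij]
      simp
  -- trace of ψ
  have hψtr : ψ.trace = 1 := by
    rw [hψ, Matrix.trace]
    have : ∀ i, Matrix.diag (Matrix.vecMulVec v (star v)) i = star (v i) * v i := by
      intro i; simp [Matrix.diag, vecMulVec_apply, mul_comm]
    simp only [this]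
    exact hv
  have hdC0 : (d : ℂ) ≠ 0 := by
    have : 0 < d := by omega
    exact_mod_cast Nat.cast_ne_zero.mpr (by omega)
  constructor
  · rw [hchoi]
    exact one_kron_psd (psd_smul_real hM_psd hdC)
  · intro X
    rw [hT X, Matrix.trace_smul, Matrix.trace_add, Matrix.trace_smul, Matrix.trace_sub,
      Matrix.trace_smul, Matrix.trace_one, hψtr]
    simp only [smul_eq_mul, Fintype.card_fin]
    field_simp
    ring
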